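/- arXiv:2302.12302 — 3 statements merged into one kernel-verified Lean document; each statement's English description precedes it below -/
import Mathlib

section
/- For t < n, the dyadic Fejér kernel satisfies: K_{2^n}(x) = 2^{t−1} if x ∈ I_n(e_t) (i.e. x ∈ I_t \ I_{t+1} with x_t = 1 and x_j = 0 for all other j < n); K_{2^n}(x) = (2^n + 1)/2 if x ∈ I_n; and K_{2^n}(x) = 0 otherwise. -/
open MeasureTheory Finset

/-- The Walsh group `G = (ℤ/2)^ℕ`. -/
abbrev G : Type := ℕ → ZMod 2

instance : TopologicalSpace (ZMod 2) := ⊥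
instance : DiscreteTopology (ZMod 2) := ⟨rfl⟩
noncomputable instance : MeasurableSpace G := borel G
instance : BorelSpace G := ⟨rfl⟩

/-- The normalized Haar measure on `G`. -/
noncomputable def μ : Measure G :=
  Measure.addHaarMeasure (⊤ : TopologicalSpace.PositiveCompacts G)

/-- Rademacher functions. -/
noncomputable def rad (k : ℕ) (x : G) : ℝ := (-1 : ℝ) ^ (x k).val

/-- Walsh–Paley functions. -/
noncomputable def walsh (n : ℕ) (x : G) : ℝ :=
  ∏ k ∈ Finset.range n, rad k x ^ (n.testBit k).toNat

/-- Walsh–Dirichlet kernels `D_n = ∑_{k<n} w_k`. -/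
noncomputable def dirichlet (n : ℕ) (x : G) : ℝ := ∑ k ∈ Finset.range n, walsh k x

/-- Walsh–Fejér kernels `K_n = (1/n) ∑_{k=1}^n D_k`. -/
noncomputable def fejer (n : ℕ) (x : G) : ℝ :=
  (1 / (n : ℝ)) * ∑ k ∈ Finset.range n, dirichlet (k + 1) x

/-- The cylinder `I_n(x) = {y : y_j = x_j for j < n}`. -/
def cyl (n : ℕ) (x : G) : Set G := {y | ∀ j < n, y j = x j}

/-- `I_n = I_n(0)`. -/
def I (n : ℕ) : Set G := cyl n 0

/-- `e_k` has a `1` in coordinate `k` and `0` elsewhere. -/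
def e (k : ℕ) : G := fun j => if j = k then 1 else 0

/-- Walsh–Fourier coefficients. -/
noncomputable def fcoef (f : G → ℝ) (n : ℕ) : ℝ := ∫ x, f x * walsh n x ∂μ

/-- Walsh partial sums. -/
noncomputable def partialSum (f : G → ℝ) (n : ℕ) (x : G) : ℝ :=
  ∑ k ∈ Finset.range n, fcoef f k * walsh k x

/-- Fejér means `σ_n f = (1/n) ∑_{k=1}^n S_k f`. -/
noncomputable def fejerMean (f : G → ℝ) (n : ℕ) (x : G) : ℝ :=
  (1 / (n : ℝ)) * ∑ k ∈ Finset.range n, partialSum f (k + 1) x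

section Aux

variable (r : ℕ → ℝ)

/-- product form of a Walsh-type character restricted to `n` bits -/
noncomputable def gg (n k : ℕ) : ℝ := ∏ j ∈ Finset.range n, r j ^ (k.testBit j).toNat

noncomputable def SS (n : ℕ) : ℝ := ∑ k ∈ Finset.range (2 ^ n), gg r n k

noncomputable def TT (n : ℕ) : ℝ := ∑ k ∈ Finset.range (2 ^ n), (k : ℝ) * gg r n k

noncomputable def Pp (n : ℕ) : ℝ := ∏ j ∈ Finset.range n, (1 + r j)

lemma gg_succ_lt {n k : ℕ} (hk : k < 2 ^ n) : gg r (n + 1) k = gg r n k := by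
  unfold gg
  rw [Finset.prod_range_succ, Nat.testBit_eq_false_of_lt hk]
  simp

lemma gg_succ_add {n k : ℕ} (hk : k < 2 ^ n) :
    gg r (n + 1) (2 ^ n + k) = r n * gg r n k := by
  unfold gg
  rw [Finset.prod_range_succ, Nat.testBit_two_pow_add_eq, Nat.testBit_eq_false_of_lt hk]
  have : ∀ j ∈ Finset.range n, r j ^ ((2 ^ n + k).testBit j).toNat
      = r j ^ (k.testBit j).toNat := by
    intro j hj
    rw [Nat.testBit_two_pow_add_gt (Finset.mem_range.mp hj)]
  rw [Finset.prod_congr rfl this]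
  simp [mul_comm]

lemma SS_succ (n : ℕ) : SS r (n + 1) = (1 + r n) * SS r n := by
  unfold SS
  rw [pow_succ, mul_two, Finset.sum_range_add]
  have h1 : ∀ k ∈ Finset.range (2 ^ n), gg r (n+1) k = gg r n k :=
    fun k hk => gg_succ_lt r (Finset.mem_range.mp hk)
  have h2 : ∀ k ∈ Finset.range (2 ^ n), gg r (n+1) (2 ^ n + k) = r n * gg r n k :=
    fun k hk => gg_succ_add r (Finset.mem_range.mp hk)
  rw [Finset.sum_congr rfl h1, Finset.sum_congr rfl h2, ← Finset.mul_sum]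
  ring

lemma TT_succ (n : ℕ) :
    TT r (n + 1) = (1 + r n) * TT r n + 2 ^ n * r n * SS r n := by
  unfold TT SS
  rw [pow_succ, mul_two, Finset.sum_range_add]
  have h1 : ∀ k ∈ Finset.range (2 ^ n), (k:ℝ) * gg r (n+1) k = (k:ℝ) * gg r n k :=
    fun k hk => by rw [gg_succ_lt r (Finset.mem_range.mp hk)]
  have h2 : ∀ k ∈ Finset.range (2 ^ n),
      ((2 ^ n + k : ℕ):ℝ) * gg r (n+1) (2 ^ n + k)
        = 2 ^ n * (r n * gg r n k) + r n * ((k:ℝ) * gg r n k) := by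
    intro k hk
    rw [gg_succ_add r (Finset.mem_range.mp hk)]
    push_cast
    ring
  rw [Finset.sum_congr rfl h1, Finset.sum_congr rfl h2]
  simp only [Finset.sum_add_distrib, ← Finset.mul_sum]
  ring

lemma SS_eq_Pp (n : ℕ) : SS r n = Pp r n := by
  induction n with
  | zero => simp [SS, Pp, gg]
  | succ n ih => rw [SS_succ, ih]; unfold Pp; rw [Finset.prod_range_succ]; ring

lemma Pp_all_one {n : ℕ} (h : ∀ j < n, r j = 1) : Pp r n = 2 ^ n := by
  unfold Pp
  rw [Finset.prod_congr rfl (fun j hj => by rw [h j (Finset.mem_range.mp hj)])]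
  simp
  norm_num

lemma Pp_zero {n s : ℕ} (hs : s < n) (h : r s = -1) : Pp r n = 0 :=
  Finset.prod_eq_zero (Finset.mem_range.mpr hs) (by rw [h]; ring)

lemma sum_range_cast (N : ℕ) : ∑ k ∈ Finset.range N, (k : ℝ) = N * (N - 1) / 2 := by
  induction N with
  | zero => simp
  | succ N ih => rw [Finset.sum_range_succ, ih]; push_cast; ring

lemma TT_all_one {n : ℕ} (h : ∀ j < n, r j = 1) :
    TT r n = 2 ^ n * (2 ^ n - 1) / 2 := by
  unfold TT
  have hg : ∀ k ∈ Finset.range (2 ^ n), (k:ℝ) * gg r n k = (k:ℝ) := by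
    intro k hk
    unfold gg
    rw [Finset.prod_congr rfl (fun j hj => by rw [h j (Finset.mem_range.mp hj), one_pow])]
    simp
  rw [Finset.sum_congr rfl hg, sum_range_cast]
  push_cast
  ring

lemma SS_all_one {n : ℕ} (h : ∀ j < n, r j = 1) : SS r n = 2 ^ n := by
  rw [SS_eq_Pp, Pp_all_one r h]

lemma TT_case_b {t : ℕ} (ht : r t = -1) :
    ∀ m, t < m → ∀ n, m ≤ n → (∀ j < n, j ≠ t → r j = 1) →
      TT r m = -(2 ^ t * 2 ^ m) / 2 := by
  intro m
  induction m with
  | zero => omega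
  | succ m ih =>
    intro htm n hmn hone
    rcases Nat.lt_or_ge t m with h | h
    · have hrm : r m = 1 := hone m (by omega) (by omega)
      rw [TT_succ, ih h n (by omega) hone, SS_eq_Pp, Pp_zero r h ht, hrm]
      ring
    · have : m = t := by omega
      subst this
      have hSS : SS r m = 2 ^ m := SS_all_one r (fun j hj => hone j (by omega) (by omega))
      rw [TT_succ, hSS, ht]
      ring

lemma TT_case_c {s t : ℕ} (hst : s < t) (hs : r s = -1) (htr : r t = -1) :
    ∀ m, t < m → TT r m = 0 := by
  intro m
  induction m with
  | zero => omega
  | succ m ih =>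
    intro htm
    rcases Nat.lt_or_ge t m with h | h
    · rw [TT_succ, ih h, SS_eq_Pp, Pp_zero r (by omega : s < m) hs]
      ring
    · have : m = t := by omega
      subst this
      rw [TT_succ, SS_eq_Pp, Pp_zero r hst hs, htr]
      ring

end Aux
lemma walsh_eq_gg {n k : ℕ} (x : G) (hk : k < 2 ^ n) :
    walsh k x = gg (fun j => rad j x) n k := by
  unfold walsh gg
  have h1 : Finset.range k ⊆ Finset.range (max k n) :=
    Finset.range_subset_range.mpr (le_max_left _ _)
  have h2 : Finset.range n ⊆ Finset.range (max k n) :=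
    Finset.range_subset_range.mpr (le_max_right _ _)
  rw [Finset.prod_subset h1 ?hout1, Finset.prod_subset h2 ?hout2]
  case hout1 =>
    intro j _ hj
    rw [Finset.mem_range, not_lt] at hj
    have : k < 2 ^ j := lt_of_le_of_lt hj (Nat.lt_two_pow_self (n := j))
    rw [Nat.testBit_eq_false_of_lt this]
    simp
  case hout2 =>
    intro j _ hj
    rw [Finset.mem_range, not_lt] at hj
    have : k < 2 ^ j := lt_of_lt_of_le hk (Nat.pow_le_pow_right (by norm_num) hj)
    rw [Nat.testBit_eq_false_of_lt this]
    simp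

lemma swap_sum (a : ℕ → ℝ) (N : ℕ) :
    ∑ m ∈ Finset.range N, ∑ k ∈ Finset.range (m + 1), a k
      = ∑ k ∈ Finset.range N, ((N : ℝ) - k) * a k := by
  induction N with
  | zero => simp
  | succ N ih =>
    rw [Finset.sum_range_succ, ih]
    have h : ∀ k ∈ Finset.range (N + 1),
        (((N + 1 : ℕ) : ℝ) - k) * a k = ((N : ℝ) - k) * a k + a k := by
      intro k _; push_cast; ring
    rw [Finset.sum_congr rfl h, Finset.sum_add_distrib,
      Finset.sum_range_succ (fun k => ((N : ℝ) - k) * a k)]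
    simp

lemma zmod2_ne_zero {a : ZMod 2} (h : a ≠ 0) : a = 1 := by
  revert h; revert a; decide

lemma rad_of_zero {x : G} {j : ℕ} (h : x j = 0) : rad j x = 1 := by
  simp [rad, h, ZMod.val_one]

lemma rad_of_one {x : G} {j : ℕ} (h : x j = 1) : rad j x = -1 := by
  simp [rad, h, ZMod.val_one]

lemma fejer_pow (n : ℕ) (x : G) :
    fejer (2 ^ n) x
      = (1 / (2 ^ n : ℝ)) *
        ((2 ^ n : ℝ) * SS (fun j => rad j x) n - TT (fun j => rad j x) n) := by
  unfold fejer dirichlet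
  rw [swap_sum (fun k => walsh k x) (2 ^ n)]
  have h : ∀ k ∈ Finset.range (2 ^ n),
      (((2 ^ n : ℕ) : ℝ) - k) * walsh k x
        = (2 ^ n : ℝ) * gg (fun j => rad j x) n k
          - (k : ℝ) * gg (fun j => rad j x) n k := by
    intro k hk
    rw [walsh_eq_gg x (Finset.mem_range.mp hk)]
    push_cast
    ring
  rw [Finset.sum_congr rfl h, Finset.sum_sub_distrib, ← Finset.mul_sum]
  unfold SS TT
  push_cast
  ring
/-- values of the dyadic Fejér kernel `K_{2^n}`. -/
theorem fejer_dyadic (n : ℕ) (x : G) :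
    (∀ t < n, x ∈ cyl n (e t) → fejer (2 ^ n) x = (2 : ℝ) ^ t / 2) ∧
    (x ∈ I n → fejer (2 ^ n) x = ((2 : ℝ) ^ n + 1) / 2) ∧
    (x ∉ I n → (∀ t < n, x ∉ cyl n (e t)) → fejer (2 ^ n) x = 0) := by
  set r : ℕ → ℝ := fun j => rad j x with hr
  have h2n : (2 : ℝ) ^ n ≠ 0 := by positivity
  have hfe := fejer_pow n x
  refine ⟨?_, ?_, ?_⟩
  · -- case x ∈ cyl n (e t)
    intro t ht hx
    have hrt : r t = -1 := by
      apply rad_of_one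
      have := hx t ht
      simpa [e] using this
    have hone : ∀ j < n, j ≠ t → r j = 1 := by
      intro j hj hjt
      apply rad_of_zero
      have := hx j hj
      simpa [e, hjt] using this
    have hTT : TT r n = -(2 ^ t * 2 ^ n) / 2 := TT_case_b r hrt n ht n le_rfl hone
    have hSS : SS r n = 0 := by rw [SS_eq_Pp, Pp_zero r ht hrt]
    rw [hfe, hSS, hTT]
    field_simp
    ring
  · -- case x ∈ I n
    intro hx
    have hone : ∀ j < n, r j = 1 := by
      intro j hj
      apply rad_of_zero
      exact hx j hj
    have hSS : SS r n = 2 ^ n := SS_all_one r hone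
    have hTT : TT r n = 2 ^ n * (2 ^ n - 1) / 2 := TT_all_one r hone
    rw [hfe, hSS, hTT]
    field_simp
    ring
  · -- remaining case
    intro hI hcyl
    have hIa : ∃ a, a < n ∧ x a ≠ 0 := by
      by_contra h
      push_neg at h
      exact hI (fun j hj => h j hj)
    obtain ⟨a, ha, hxa⟩ := hIa
    have hxa1 : x a = 1 := zmod2_ne_zero hxa
    have hb : ∃ b, b < n ∧ x b ≠ e a b := by
      by_contra h
      push_neg at h
      exact hcyl a ha (fun j hj => h j hj)
    obtain ⟨b, hb, hxb⟩ := hb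
    have hba : b ≠ a := by
      intro hba
      subst hba
      apply hxb
      simp [e, hxa1]
    have hxb1 : x b = 1 := by
      apply zmod2_ne_zero
      intro h0
      apply hxb
      simp [e, hba, h0]
    have hra : r a = -1 := rad_of_one hxa1
    have hrb : r b = -1 := rad_of_one hxb1
    have key : TT r n = 0 ∧ Pp r n = 0 := by
      rcases lt_or_gt_of_ne hba with h | h
      · exact ⟨TT_case_c r h hrb hra n (by omega), Pp_zero r ha hra⟩
      · exact ⟨TT_case_c r h hra hrb n (by omega), Pp_zero r hb hrb⟩
    rw [hfe, ← hr, key.1, SS_eq_Pp, key.2]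
    ring
end

section
/- Let n = Σ_{i=1}^{r} 2^{n_i} with n_1 > n_2 > ⋯ > n_r ≥ 0, and set n^{(A)} = Σ_{i=A+1}^{r} 2^{n_i}. Then n·K_n = Σ_{A=1}^{r} (Π_{j=1}^{A−1} w_{2^{n_j}}) · (2^{n_A} K_{2^{n_A}} + n^{(A)} D_{2^{n_A}}). -/
open MeasureTheory Finset

noncomputable def NK (n : ℕ) (x : G) : ℝ := ∑ k ∈ Finset.range n, dirichlet (k + 1) x

lemma walsh_eq_prod (n N : ℕ) (hn : n ≤ N) (x : G) :
    walsh n x = ∏ k ∈ Finset.range N, rad k x ^ (n.testBit k).toNat := by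
  rw [← Finset.prod_range_mul_prod_Ico _ hn]
  unfold walsh
  have h0 : ∏ k ∈ Finset.Ico n N, rad k x ^ (n.testBit k).toNat = 1 := by
    apply Finset.prod_eq_one
    intro k hk
    have hk' : n < 2 ^ k := lt_of_le_of_lt (Finset.mem_Ico.mp hk).1 (Nat.lt_two_pow_self (n := k))
    rw [Nat.testBit_lt_two_pow hk']
    simp
  rw [h0, mul_one]

lemma walsh_two_pow_add (p k : ℕ) (hk : k < 2 ^ p) (x : G) :
    walsh (2 ^ p + k) x = walsh (2 ^ p) x * walsh k x := by
  set N := 2 ^ p + k with hN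
  have h1 : 2 ^ p + k ≤ N := le_rfl
  have h2 : 2 ^ p ≤ N := Nat.le_add_right _ _
  have h3 : k ≤ N := Nat.le_add_left _ _
  rw [walsh_eq_prod _ N h1, walsh_eq_prod _ N h2, walsh_eq_prod _ N h3,
    ← Finset.prod_mul_distrib]
  apply Finset.prod_congr rfl
  intro j _
  rw [← pow_add]
  congr 1
  rcases lt_trichotomy j p with h | h | h
  · rw [Nat.testBit_two_pow_add_gt h, Nat.testBit_two_pow_of_ne (Nat.ne_of_gt h)]
    simp
  · subst h
    rw [Nat.testBit_two_pow_add_eq, Nat.testBit_two_pow_self,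
      Nat.testBit_lt_two_pow hk]
    simp
  · have hb : 2 ^ p + k < 2 ^ j := by
      calc 2 ^ p + k < 2 ^ p + 2 ^ p := by omega
      _ = 2 ^ (p + 1) := by ring
      _ ≤ 2 ^ j := Nat.pow_le_pow_right (by norm_num) h
    rw [Nat.testBit_lt_two_pow hb, Nat.testBit_two_pow_of_ne (Nat.ne_of_lt h),
      Nat.testBit_lt_two_pow (lt_trans hk (by omega))]
    simp

lemma dirichlet_two_pow_add (p q : ℕ) (hq : q ≤ 2 ^ p) (x : G) :
    dirichlet (2 ^ p + q) x = dirichlet (2 ^ p) x + walsh (2 ^ p) x * dirichlet q x := by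
  unfold dirichlet
  rw [Finset.sum_range_add, Finset.mul_sum]
  congr 1
  exact Finset.sum_congr rfl fun i hi =>
    walsh_two_pow_add p i (lt_of_lt_of_le (Finset.mem_range.mp hi) hq) x

lemma NK_two_pow_add (p q : ℕ) (hq : q ≤ 2 ^ p) (x : G) :
    NK (2 ^ p + q) x = NK (2 ^ p) x + (q : ℝ) * dirichlet (2 ^ p) x
      + walsh (2 ^ p) x * NK q x := by
  unfold NK
  rw [Finset.sum_range_add, Finset.mul_sum]
  have h : ∀ i ∈ Finset.range q, dirichlet (2 ^ p + i + 1) x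
      = dirichlet (2 ^ p) x + walsh (2 ^ p) x * dirichlet (i + 1) x := by
    intro i hi
    rw [add_assoc]
    exact dirichlet_two_pow_add p (i + 1) (Nat.succ_le_of_lt
      (lt_of_lt_of_le (Finset.mem_range.mp hi) hq)) x
  rw [Finset.sum_congr rfl h, Finset.sum_add_distrib, Finset.sum_const,
    Finset.card_range, nsmul_eq_mul]
  ring

lemma sum_two_pow_lt (r : ℕ) (m : Fin r → ℕ) (hm : StrictAnti m) (p : ℕ)
    (hp : ∀ i, m i < p) : (∑ i, 2 ^ m i) < 2 ^ p := by
  induction r generalizing p with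
  | zero => simpa using Nat.pos_pow_of_pos p (by norm_num)
  | succ n ih =>
    rw [Fin.sum_univ_succ]
    have hm' : StrictAnti (m ∘ Fin.succ) := fun i j h => hm (by simpa using h)
    have h1 : (∑ i : Fin n, 2 ^ (m ∘ Fin.succ) i) < 2 ^ m 0 :=
      ih (m ∘ Fin.succ) hm' (m 0) fun i => hm (Fin.succ_pos i)
    have h2 : 2 ^ (m 0 + 1) ≤ 2 ^ p := Nat.pow_le_pow_right (by norm_num) (hp 0)
    have : (2:ℕ) ^ (m 0 + 1) = 2 ^ m 0 + 2 ^ m 0 := by ring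
    simp only [Function.comp] at h1
    omega

lemma NK_decomp (r : ℕ) (m : Fin r → ℕ) (hm : StrictAnti m) (x : G) :
    NK (∑ i, 2 ^ m i) x =
      ∑ A, (∏ j ∈ Finset.univ.filter (· < A), walsh (2 ^ m j) x) *
        (NK (2 ^ m A) x + ((∑ i ∈ Finset.univ.filter (A < ·), 2 ^ m i : ℕ) : ℝ)
          * dirichlet (2 ^ m A) x) := by
  induction r with
  | zero => simp [NK]
  | succ n ih =>
    have hm' : StrictAnti (fun i : Fin n => m i.succ) := fun i j h => hm (by simpa using h)
    have htail : (∑ i : Fin n, 2 ^ m i.succ) ≤ 2 ^ m 0 :=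
      le_of_lt (sum_two_pow_lt n _ hm' (m 0) fun i => hm (Fin.succ_pos i))
    rw [Fin.sum_univ_succ, NK_two_pow_add (m 0) _ htail x, ih _ hm']
    rw [Fin.sum_univ_succ]
    have e1 : (Finset.univ.filter (· < (0 : Fin (n + 1)))) = ∅ := by
      apply Finset.filter_eq_empty_iff.mpr
      intro j _
      exact Fin.not_lt_zero j
    have e2 : (∑ i ∈ Finset.univ.filter ((0 : Fin (n + 1)) < ·), 2 ^ m i)
        = ∑ i : Fin n, 2 ^ m i.succ := by
      rw [Finset.sum_filter, Fin.sum_univ_succ]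
      simp [Fin.succ_pos]
    have e3 : ∀ A : Fin n,
        (∏ j ∈ Finset.univ.filter (· < A.succ), walsh (2 ^ m j) x)
        = walsh (2 ^ m 0) x *
            ∏ j ∈ Finset.univ.filter (· < A), walsh (2 ^ m (Fin.succ j)) x := by
      intro A
      rw [Finset.prod_filter, Fin.prod_univ_succ, Finset.prod_filter]
      simp [Fin.succ_lt_succ_iff, Fin.succ_pos]
    have e4 : ∀ A : Fin n,
        (∑ i ∈ Finset.univ.filter (A.succ < ·), 2 ^ m i)
        = ∑ i ∈ Finset.univ.filter (A < ·), 2 ^ m (Fin.succ i) := by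
      intro A
      rw [Finset.sum_filter, Fin.sum_univ_succ, Finset.sum_filter]
      simp [Fin.succ_lt_succ_iff]
    rw [e1, e2]
    simp only [e3, e4]
    rw [Finset.prod_empty, one_mul, Finset.mul_sum]
    simp only [mul_assoc]

/-- the decomposition of `n·K_n` along the binary expansion
`n = ∑_{i=1}^r 2^{n_i}` with `n_1 > ⋯ > n_r`. -/
theorem nK_decomposition (r : ℕ) (m : Fin r → ℕ) (hm : StrictAnti m) (x : G) :
    ((∑ i, 2 ^ m i : ℕ) : ℝ) * fejer (∑ i, 2 ^ m i) x =
      ∑ A, (∏ j ∈ Finset.univ.filter (· < A), walsh (2 ^ m j) x) *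
        ((2 : ℝ) ^ m A * fejer (2 ^ m A) x +
          ((∑ i ∈ Finset.univ.filter (A < ·), 2 ^ m i : ℕ) : ℝ) * dirichlet (2 ^ m A) x) := by
  have hfe : ∀ n : ℕ, n ≠ 0 → (n : ℝ) * fejer n x = NK n x := by
    intro n hn
    unfold fejer NK
    rw [one_div, ← mul_assoc, mul_inv_cancel₀ (by exact_mod_cast hn), one_mul]
  rcases Nat.eq_zero_or_pos r with hr | hr
  · subst hr
    simp [fejer]
  · have hn0 : (∑ i, 2 ^ m i) ≠ 0 := by
      have h1 : 0 < 2 ^ m ⟨0, hr⟩ := Nat.pow_pos (by norm_num)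
      have h2 : 2 ^ m ⟨0, hr⟩ ≤ ∑ i, 2 ^ m i :=
        Finset.single_le_sum (f := fun i : Fin r => 2 ^ m i) (fun i _ => Nat.zero_le _) (Finset.mem_univ (⟨0, hr⟩ : Fin r))
      omega
    rw [hfe _ hn0, NK_decomp r m hm x]
    apply Finset.sum_congr rfl
    intro A _
    congr 2
    rw [← hfe (2 ^ m A) (by positivity)]
    push_cast
    ring
end

section
/- Let n = Σ_{i=1}^{s} Σ_{k=l_i}^{t_i} 2^k where t_1 ≥ l_1 and l_i − 2 ≥ t_{i+1} ≥ l_{i+1} for each i (blocks of consecutive binary digits separated by at least one zero). Then there is an absolute constant c such that |n K_n(x)| ≤ c Σ_{A=1}^{s} (2^{l_A} K_{2^{l_A}}(x) + 2^{t_A} K_{2^{t_A}}(x) + 2^{l_A} Σ_{k=l_A}^{t_A} D_{2^k}(x)) for all x ∈ G. -/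
open MeasureTheory Finset

/-! ### Auxiliary development -/

/-- `sig n = n · K_n = ∑_{k=1}^n D_k`. -/
noncomputable def sig (n : ℕ) (x : G) : ℝ := ∑ k ∈ Finset.range n, dirichlet (k + 1) x

lemma testBit_add_of_dvd {k a j : ℕ} (ha : 2 ^ k ∣ a) (hj : j < 2 ^ k) (i : ℕ) :
    ((a + j).testBit i).toNat = (a.testBit i).toNat + (j.testBit i).toNat := by
  rcases lt_or_ge i k with hik | hik
  · have h2 : (2:ℕ) ^ i ∣ a := dvd_trans (pow_dvd_pow 2 hik.le) ha
    have hev : a / 2 ^ i % 2 = 0 := by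
      obtain ⟨m, hm⟩ : (2:ℕ)^(i+1) ∣ a := dvd_trans (pow_dvd_pow 2 hik) ha
      subst hm
      have : 2 ^ (i+1) * m = 2 ^ i * (2 * m) := by ring
      rw [this, Nat.mul_div_cancel_left _ (by positivity)]
      simp [Nat.mul_mod_right]
    have hsplit : (a + j) / 2 ^ i = a / 2 ^ i + j / 2 ^ i := Nat.add_div_of_dvd_right h2
    have h1 : (a + j).testBit i = j.testBit i := by
      simp [Nat.testBit_eq_decide_div_mod_eq, hsplit, Nat.add_mod, hev]
    have h0 : a.testBit i = false := by
      simp [Nat.testBit_eq_decide_div_mod_eq, hev]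
    rw [h1, h0]; simp
  · have hj0 : j.testBit i = false :=
      Nat.testBit_lt_two_pow (lt_of_lt_of_le hj (Nat.pow_le_pow_right two_pos hik))
    have hdiv : (a + j) / 2 ^ i = a / 2 ^ i := by
      have e1 : (2:ℕ) ^ i = 2 ^ k * 2 ^ (i - k) := by rw [← pow_add, Nat.add_sub_cancel' hik]
      rw [e1, ← Nat.div_div_eq_div_mul, ← Nat.div_div_eq_div_mul,
        Nat.add_div_of_dvd_right ha, Nat.div_eq_of_lt hj, Nat.add_zero]
    have h1 : (a + j).testBit i = a.testBit i := by
      simp [Nat.testBit_eq_decide_div_mod_eq, hdiv]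
    rw [h1, hj0]; simp

lemma rad_cases (k : ℕ) (x : G) : rad k x = 1 ∨ rad k x = -1 := by
  unfold rad
  have h := ZMod.val_lt (x k)
  interval_cases h2 : (x k).val <;> simp

lemma walsh_ext {n M : ℕ} (h : n ≤ M) (x : G) :
    walsh n x = ∏ i ∈ Finset.range M, rad i x ^ (n.testBit i).toNat := by
  unfold walsh
  apply Finset.prod_subset (Finset.range_subset_range.2 h)
  intro i _ hi
  have hni : n ≤ i := le_of_not_gt (by simpa using hi)
  have : n.testBit i = false :=
    Nat.testBit_lt_two_pow (lt_of_lt_of_le (Nat.lt_two_pow_self (n := n)) (Nat.pow_le_pow_right two_pos hni))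
  rw [this]; simp

lemma walsh_add {k a j : ℕ} (ha : 2 ^ k ∣ a) (hj : j < 2 ^ k) (x : G) :
    walsh (a + j) x = walsh a x * walsh j x := by
  rw [walsh_ext (le_refl (a+j)) x, walsh_ext (Nat.le_add_right a j) x,
    walsh_ext (Nat.le_add_left j a) x, ← Finset.prod_mul_distrib]
  refine Finset.prod_congr rfl fun i _ => ?_
  rw [testBit_add_of_dvd ha hj i, pow_add]

lemma walsh_zero (x : G) : walsh 0 x = 1 := by simp [walsh]

lemma walsh_two_pow (k : ℕ) (x : G) : walsh (2 ^ k) x = rad k x := by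
  rw [walsh_ext (le_refl (2^k)) x]
  rw [Finset.prod_eq_single k]
  · simp [Nat.testBit_two_pow_self]
  · intro i _ hik
    rw [Nat.testBit_two_pow_of_ne (Ne.symm hik)]; simp
  · intro hk; exact absurd (Finset.mem_range.2 (Nat.lt_two_pow_self (n := k))) hk

lemma dirichlet_one (x : G) : dirichlet 1 x = 1 := by
  simp [dirichlet, walsh_zero]

lemma dirichlet_add {k a j : ℕ} (ha : 2 ^ k ∣ a) (hj : j ≤ 2 ^ k) (x : G) :
    dirichlet (a + j) x = dirichlet a x + walsh a x * dirichlet j x := by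
  unfold dirichlet
  rw [Finset.sum_range_add, Finset.mul_sum]
  congr 1
  refine Finset.sum_congr rfl fun i hi => ?_
  exact walsh_add ha (lt_of_lt_of_le (Finset.mem_range.1 hi) hj) x

lemma sig_add {k a j : ℕ} (ha : 2 ^ k ∣ a) (hj : j ≤ 2 ^ k) (x : G) :
    sig (a + j) x = sig a x + (j : ℝ) * dirichlet a x + walsh a x * sig j x := by
  unfold sig
  rw [Finset.sum_range_add, Finset.mul_sum]
  rw [add_assoc]
  congr 1
  have : ∀ i ∈ Finset.range j, dirichlet (a + i + 1) x
      = dirichlet a x + walsh a x * dirichlet (i+1) x := by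
    intro i hi
    rw [add_assoc]
    exact dirichlet_add ha (Nat.succ_le_of_lt (lt_of_lt_of_le (Finset.mem_range.1 hi) hj)) x
  rw [Finset.sum_congr rfl this, Finset.sum_add_distrib, Finset.sum_const, Finset.card_range,
    nsmul_eq_mul]

lemma sig_one (x : G) : sig 1 x = 1 := by simp [sig, dirichlet_one]

lemma dirichlet_two_pow_succ (k : ℕ) (x : G) :
    dirichlet (2 ^ (k+1)) x = (1 + rad k x) * dirichlet (2 ^ k) x := by
  have h : (2:ℕ) ^ (k+1) = 2 ^ k + 2 ^ k := by ring
  rw [h, dirichlet_add (dvd_refl _) (le_refl _) x, walsh_two_pow]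
  ring

lemma sig_two_pow_succ (k : ℕ) (x : G) :
    sig (2 ^ (k+1)) x = (1 + rad k x) * sig (2 ^ k) x + (2:ℝ) ^ k * dirichlet (2 ^ k) x := by
  have h : (2:ℕ) ^ (k+1) = 2 ^ k + 2 ^ k := by ring
  rw [h, sig_add (dvd_refl _) (le_refl _) x, walsh_two_pow]
  push_cast
  ring

/-- Nonnegativity and the key pointwise bound `2^k D_{2^k} ≤ 2 sig(2^k)`. -/
lemma key (k : ℕ) (x : G) :
    0 ≤ dirichlet (2 ^ k) x ∧ 0 ≤ sig (2 ^ k) x ∧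
      (2:ℝ) ^ k * dirichlet (2 ^ k) x ≤ 2 * sig (2 ^ k) x := by
  induction k with
  | zero => refine ⟨?_, ?_, ?_⟩ <;> simp [dirichlet_one, sig_one]
  | succ k ih =>
    obtain ⟨hD, hS, hKey⟩ := ih
    rw [dirichlet_two_pow_succ, sig_two_pow_succ]
    rcases rad_cases k x with hr | hr <;> rw [hr]
    · refine ⟨by positivity, by positivity, ?_⟩
      rw [pow_succ]
      nlinarith [hKey, hD, hS]
    · have h0 : (1 : ℝ) + -1 = 0 := by norm_num
      rw [h0, zero_mul, zero_mul, zero_add]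
      refine ⟨le_refl 0, by positivity, by rw [mul_zero]; positivity⟩

lemma abs_walsh (n : ℕ) (x : G) : |walsh n x| = 1 := by
  unfold walsh
  rw [Finset.abs_prod]
  refine Finset.prod_eq_one fun i _ => ?_
  rw [abs_pow]
  rcases rad_cases i x with hr | hr <;> rw [hr] <;> simp

/-- A block of consecutive binary digits. -/
def blk (l t : ℕ) : ℕ := ∑ k ∈ Finset.Icc l t, 2 ^ k

lemma blk_self (l : ℕ) : blk l l = 2 ^ l := by simp [blk]

lemma blk_succ {l t : ℕ} (h : l ≤ t + 1) : blk l (t + 1) = 2 ^ (t + 1) + blk l t := by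
  unfold blk
  have hins : Finset.Icc l (t+1) = insert (t+1) (Finset.Icc l t) := by
    ext a; simp [Finset.mem_Icc, Finset.mem_insert]; omega
  rw [hins, Finset.sum_insert (by simp [Finset.mem_Icc])]

lemma blk_add_pow {l t : ℕ} (h : l ≤ t) : blk l t + 2 ^ l = 2 ^ (t + 1) := by
  induction t with
  | zero =>
    have : l = 0 := Nat.le_zero.1 h
    subst this; rw [blk_self]; norm_num
  | succ t ih =>
    rcases Nat.lt_or_ge l (t+1) with hl | hl
    · rw [blk_succ (by omega), add_assoc, ih (by omega)]
      ring
    · have : l = t + 1 := le_antisymm h hl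
      subst this; rw [blk_self]; ring

lemma pow_dvd_blk (l t : ℕ) : 2 ^ l ∣ blk l t := by
  unfold blk
  refine Finset.dvd_sum fun k hk => pow_dvd_pow 2 ?_
  exact (Finset.mem_Icc.1 hk).1

lemma blk_lt {l t : ℕ} (h : l ≤ t) : blk l t < 2 ^ (t + 1) := by
  have := blk_add_pow h
  have h2 : 0 < 2 ^ l := Nat.two_pow_pos l
  omega

/-- The crucial closed-form identity for `sig` on a block. -/
lemma sig_blk {l t : ℕ} (h : l ≤ t) (x : G) :
    sig (blk l t) x = sig (2 ^ (t+1)) x - (2:ℝ) ^ l * dirichlet (2 ^ (t+1)) x +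
      walsh (blk l t) x * ((2:ℝ) ^ l * dirichlet (2 ^ l) x - sig (2 ^ l) x) := by
  induction t with
  | zero =>
    have hl : l = 0 := Nat.le_zero.1 h
    subst hl
    rw [blk_self, sig_two_pow_succ 0, dirichlet_two_pow_succ 0, walsh_two_pow 0]
    ring
  | succ t ih =>
    rcases Nat.lt_or_ge l (t+1) with hl | hl
    · -- l ≤ t, use recursion
      have hlt : l ≤ t := by omega
      have hblt : blk l t < 2 ^ (t+1) := blk_lt hlt
      rw [blk_succ (by omega),
        sig_add (dvd_refl (2^(t+1))) hblt.le x,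
        walsh_add (dvd_refl (2^(t+1))) hblt x,
        walsh_two_pow (t+1), ih hlt,
        sig_two_pow_succ (t+1), dirichlet_two_pow_succ (t+1)]
      have hcast : ((blk l t : ℕ) : ℝ) = 2 ^ (t+1) - 2 ^ l := by
        have := blk_add_pow hlt
        have : ((blk l t + 2 ^ l : ℕ) : ℝ) = ((2 ^ (t+1) : ℕ) : ℝ) := by rw [this]
        push_cast at this
        linarith
      rw [hcast]
      ring
    · have : l = t + 1 := le_antisymm h hl
      subst this
      rw [blk_self, sig_two_pow_succ (t+1), dirichlet_two_pow_succ (t+1), walsh_two_pow (t+1)]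
      ring

lemma sig_two_pow_succ_le (k : ℕ) (x : G) : sig (2 ^ (k+1)) x ≤ 4 * sig (2 ^ k) x := by
  obtain ⟨hD, hS, hKey⟩ := key k x
  rw [sig_two_pow_succ]
  rcases rad_cases k x with hr | hr <;> rw [hr] <;> nlinarith

lemma dirichlet_two_pow_succ_le (k : ℕ) (x : G) :
    dirichlet (2 ^ (k+1)) x ≤ 2 * dirichlet (2 ^ k) x := by
  obtain ⟨hD, _, _⟩ := key k x
  rw [dirichlet_two_pow_succ]
  rcases rad_cases k x with hr | hr <;> rw [hr] <;> nlinarith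

/-- Single-block estimate. -/
lemma sig_blk_bound {l t : ℕ} (h : l ≤ t) (x : G) :
    |sig (blk l t) x| ≤ 4 * sig (2 ^ t) x + 2 * (2:ℝ) ^ l * dirichlet (2 ^ t) x +
      (2:ℝ) ^ l * dirichlet (2 ^ l) x + sig (2 ^ l) x := by
  obtain ⟨hDl, hSl, _⟩ := key l x
  obtain ⟨hDt, hSt, _⟩ := key t x
  obtain ⟨hDt1, hSt1, _⟩ := key (t+1) x
  have h1 := sig_two_pow_succ_le t x
  have h2 := dirichlet_two_pow_succ_le t x
  have hW := abs_walsh (blk l t) x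
  rw [sig_blk h x]
  calc |sig (2 ^ (t+1)) x - (2:ℝ) ^ l * dirichlet (2 ^ (t+1)) x +
      walsh (blk l t) x * ((2:ℝ) ^ l * dirichlet (2 ^ l) x - sig (2 ^ l) x)|
      ≤ |sig (2 ^ (t+1)) x| + |(2:ℝ) ^ l * dirichlet (2 ^ (t+1)) x| +
        |walsh (blk l t) x * ((2:ℝ) ^ l * dirichlet (2 ^ l) x - sig (2 ^ l) x)| := by
        exact (abs_add_le _ _).trans (by gcongr; exact abs_sub _ _)
    _ ≤ 4 * sig (2 ^ t) x + 2 * (2:ℝ) ^ l * dirichlet (2 ^ t) x +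
      ((2:ℝ) ^ l * dirichlet (2 ^ l) x + sig (2 ^ l) x) := by
        gcongr ?_ + ?_ + ?_
        · rwa [abs_of_nonneg hSt1]
        · rw [abs_of_nonneg (by positivity)]
          nlinarith [pow_pos (two_pos (α := ℝ)) l]
        · rw [abs_mul, hW, one_mul]
          exact (abs_sub _ _).trans (by rw [abs_of_nonneg (by positivity), abs_of_nonneg hSl])
    _ = _ := by ring

/-- Dirichlet kernel on a block. -/
lemma dirichlet_blk_bound {l t : ℕ} (h : l ≤ t) (x : G) :
    |dirichlet (blk l t) x| ≤ 2 * dirichlet (2 ^ t) x + dirichlet (2 ^ l) x := by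
  obtain ⟨hDl, _, _⟩ := key l x
  have h2 := dirichlet_two_pow_succ_le t x
  have hid : dirichlet (2 ^ (t+1)) x
      = dirichlet (blk l t) x + walsh (blk l t) x * dirichlet (2 ^ l) x := by
    rw [← blk_add_pow h, dirichlet_add (pow_dvd_blk l t) (le_refl _) x]
  have : dirichlet (blk l t) x
      = dirichlet (2 ^ (t+1)) x - walsh (blk l t) x * dirichlet (2 ^ l) x := by
    rw [hid]; ring
  rw [this]
  have hW := abs_walsh (blk l t) x
  calc |dirichlet (2 ^ (t+1)) x - walsh (blk l t) x * dirichlet (2 ^ l) x|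
      ≤ |dirichlet (2 ^ (t+1)) x| + |walsh (blk l t) x * dirichlet (2 ^ l) x| := abs_sub _ _
    _ ≤ 2 * dirichlet (2 ^ t) x + dirichlet (2 ^ l) x := by
        gcongr ?_ + ?_
        · rw [abs_of_nonneg (key (t+1) x).1]; exact h2
        · rw [abs_mul, hW, one_mul, abs_of_nonneg hDl]

lemma sum_blk_lt : ∀ (s : ℕ) (l t : ℕ → ℕ), (∀ i < s, l i ≤ t i) →
    (∀ i, i + 1 < s → t (i + 1) + 2 ≤ l i) → 0 < s →
    (∑ i ∈ Finset.range s, blk (l i) (t i)) < 2 ^ (t 0 + 1) := by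
  intro s
  induction s with
  | zero => intro l t _ _ h; exact absurd h (lt_irrefl 0)
  | succ s ih =>
    intro l t h1 h2 _
    rw [Finset.sum_range_succ']
    rcases Nat.eq_zero_or_pos s with hs | hs
    · subst hs
      simpa using blk_lt (h1 0 (by omega))
    · have hrest : (∑ i ∈ Finset.range s, blk (l (i+1)) (t (i+1))) < 2 ^ (t 1 + 1) := by
        simpa using ih (fun i => l (i+1)) (fun i => t (i+1))
          (fun i hi => h1 (i+1) (by omega)) (fun i hi => h2 (i+1) (by omega)) hs
      have hpow : (2:ℕ) ^ (t 1 + 1) ≤ 2 ^ (l 0) := by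
        refine Nat.pow_le_pow_right (by norm_num) ?_
        have h20 : t 1 + 2 ≤ l 0 := h2 0 (by omega)
        omega
      have hblk := blk_add_pow (h1 0 (by omega))
      omega

lemma fejer_mul (n : ℕ) (x : G) : (n : ℝ) * fejer n x = sig n x := by
  rcases Nat.eq_zero_or_pos n with hn | hn
  · subst hn; simp [fejer, sig]
  · unfold fejer sig
    have : (n : ℝ) ≠ 0 := Nat.cast_ne_zero.2 hn.ne'
    field_simp

/-- Per-block contribution. -/
noncomputable def P (l t : ℕ) (x : G) : ℝ :=
  4 * sig (2 ^ t) x + 4 * (2:ℝ) ^ l * dirichlet (2 ^ t) x +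
    2 * (2:ℝ) ^ l * dirichlet (2 ^ l) x + sig (2 ^ l) x

lemma sig_multi : ∀ (s : ℕ) (l t : ℕ → ℕ), (∀ i < s, l i ≤ t i) →
    (∀ i, i + 1 < s → t (i + 1) + 2 ≤ l i) → ∀ x : G,
    |sig (∑ i ∈ Finset.range s, blk (l i) (t i)) x| ≤
      ∑ i ∈ Finset.range s, P (l i) (t i) x := by
  intro s
  induction s with
  | zero => intro l t _ _ x; simp [sig]
  | succ s ih =>
    intro l t h1 h2 x
    have hl0t0 : l 0 ≤ t 0 := h1 0 (by omega)
    set rest := ∑ i ∈ Finset.range s, blk (l (i+1)) (t (i+1)) with hrestdef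
    have hsum : (∑ i ∈ Finset.range (s+1), blk (l i) (t i)) = blk (l 0) (t 0) + rest := by
      rw [Finset.sum_range_succ', add_comm]
    have hrest : rest ≤ 2 ^ (l 0) := by
      rcases Nat.eq_zero_or_pos s with hs | hs
      · subst hs; simp [hrestdef]
      · have hlt : rest < 2 ^ (t 1 + 1) := by
          rw [hrestdef]
          simpa using sum_blk_lt s (fun i => l (i+1)) (fun i => t (i+1))
            (fun i hi => h1 (i+1) (by omega)) (fun i hi => h2 (i+1) (by omega)) hs
        have hpow : (2:ℕ) ^ (t 1 + 1) ≤ 2 ^ (l 0) := by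
          refine Nat.pow_le_pow_right (by norm_num) ?_
          have h20 : t 1 + 2 ≤ l 0 := h2 0 (by omega)
          omega
        omega
    have hIH := ih (fun i => l (i+1)) (fun i => t (i+1))
      (fun i hi => h1 (i+1) (by omega)) (fun i hi => h2 (i+1) (by omega)) x
    rw [hsum, sig_add (pow_dvd_blk (l 0) (t 0)) hrest x]
    have hBsig := sig_blk_bound hl0t0 x
    have hBD := dirichlet_blk_bound hl0t0 x
    have hW := abs_walsh (blk (l 0) (t 0)) x
    have hrestR : (rest : ℝ) ≤ (2:ℝ) ^ (l 0) := by
      have := (Nat.cast_le (α := ℝ)).2 hrest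
      push_cast at this
      exact this
    have hterm2 : (rest : ℝ) * |dirichlet (blk (l 0) (t 0)) x| ≤
        (2:ℝ) ^ (l 0) * (2 * dirichlet (2 ^ (t 0)) x + dirichlet (2 ^ (l 0)) x) := by
      apply mul_le_mul hrestR hBD (abs_nonneg _)
      positivity
    have hP0 : |sig (blk (l 0) (t 0)) x| + (rest : ℝ) * |dirichlet (blk (l 0) (t 0)) x|
        ≤ P (l 0) (t 0) x := by
      unfold P
      nlinarith [hBsig, hterm2]
    calc |sig (blk (l 0) (t 0)) x + (rest : ℝ) * dirichlet (blk (l 0) (t 0)) x +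
        walsh (blk (l 0) (t 0)) x * sig rest x|
        ≤ |sig (blk (l 0) (t 0)) x| + |(rest : ℝ) * dirichlet (blk (l 0) (t 0)) x| +
          |walsh (blk (l 0) (t 0)) x * sig rest x| := abs_add_three _ _ _
      _ = |sig (blk (l 0) (t 0)) x| + (rest : ℝ) * |dirichlet (blk (l 0) (t 0)) x| +
          |sig rest x| := by
          rw [abs_mul, Nat.abs_cast, abs_mul, hW, one_mul]
      _ ≤ P (l 0) (t 0) x + ∑ i ∈ Finset.range s, P (l (i+1)) (t (i+1)) x := by
          exact add_le_add hP0 hIH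
      _ = ∑ i ∈ Finset.range (s+1), P (l i) (t i) x := by
          rw [Finset.sum_range_succ', add_comm]

/-- upper estimate for `|n K_n|` in terms of dyadic Dirichlet and Fejér
kernels, for `n` with binary block structure, with an absolute constant `c`. -/
theorem nK_upper_estimate :
    ∃ c : ℝ, 0 < c ∧ ∀ (s : ℕ) (l t : ℕ → ℕ),
      (∀ i < s, l i ≤ t i) → (∀ i, i + 1 < s → t (i + 1) + 2 ≤ l i) →
      ∀ x : G,
        |((∑ i ∈ Finset.range s, ∑ k ∈ Finset.Icc (l i) (t i), 2 ^ k : ℕ) : ℝ) *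
            fejer (∑ i ∈ Finset.range s, ∑ k ∈ Finset.Icc (l i) (t i), 2 ^ k) x| ≤
          c * ∑ i ∈ Finset.range s,
            ((2 : ℝ) ^ l i * fejer (2 ^ l i) x + (2 : ℝ) ^ t i * fejer (2 ^ t i) x +
              (2 : ℝ) ^ l i * ∑ k ∈ Finset.Icc (l i) (t i), dirichlet (2 ^ k) x) := by
  refine ⟨11, by norm_num, ?_⟩
  intro s l t h1 h2 x
  have hbeq : (∑ i ∈ Finset.range s, ∑ k ∈ Finset.Icc (l i) (t i), 2 ^ k)
      = ∑ i ∈ Finset.range s, blk (l i) (t i) := rfl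
  rw [hbeq, fejer_mul]
  -- rewrite the RHS fejer terms into sig
  have hfej : ∀ m : ℕ, (2 : ℝ) ^ m * fejer (2 ^ m) x = sig (2 ^ m) x := by
    intro m
    have : ((2 ^ m : ℕ) : ℝ) = (2:ℝ) ^ m := by push_cast; ring
    rw [← this, fejer_mul]
  have hRHS : ∀ i ∈ Finset.range s,
      P (l i) (t i) x ≤ 11 * ((2 : ℝ) ^ l i * fejer (2 ^ l i) x +
        (2 : ℝ) ^ t i * fejer (2 ^ t i) x +
        (2 : ℝ) ^ l i * ∑ k ∈ Finset.Icc (l i) (t i), dirichlet (2 ^ k) x) := by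
    intro i hi
    rw [hfej, hfej]
    have hlt : l i ≤ t i := h1 i (Finset.mem_range.1 hi)
    obtain ⟨hDl, hSl, _⟩ := key (l i) x
    obtain ⟨hDt, hSt, _⟩ := key (t i) x
    have hsumnn : ∀ k ∈ Finset.Icc (l i) (t i), (0:ℝ) ≤ dirichlet (2 ^ k) x :=
      fun k _ => (key k x).1
    have hSnn : (0:ℝ) ≤ ∑ k ∈ Finset.Icc (l i) (t i), dirichlet (2 ^ k) x :=
      Finset.sum_nonneg hsumnn
    have hDt_le : dirichlet (2 ^ (t i)) x ≤ ∑ k ∈ Finset.Icc (l i) (t i), dirichlet (2 ^ k) x :=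
      Finset.single_le_sum hsumnn (Finset.mem_Icc.2 ⟨hlt, le_refl _⟩)
    have hDl_le : dirichlet (2 ^ (l i)) x ≤ ∑ k ∈ Finset.Icc (l i) (t i), dirichlet (2 ^ k) x :=
      Finset.single_le_sum hsumnn (Finset.mem_Icc.2 ⟨le_refl _, hlt⟩)
    unfold P
    have hp : (0:ℝ) < 2 ^ (l i) := by positivity
    nlinarith [mul_le_mul_of_nonneg_left hDt_le hp.le, mul_le_mul_of_nonneg_left hDl_le hp.le]
  calc |sig (∑ i ∈ Finset.range s, blk (l i) (t i)) x|
      ≤ ∑ i ∈ Finset.range s, P (l i) (t i) x := sig_multi s l t h1 h2 x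
    _ ≤ ∑ i ∈ Finset.range s, 11 * ((2 : ℝ) ^ l i * fejer (2 ^ l i) x +
        (2 : ℝ) ^ t i * fejer (2 ^ t i) x +
        (2 : ℝ) ^ l i * ∑ k ∈ Finset.Icc (l i) (t i), dirichlet (2 ^ k) x) :=
      Finset.sum_le_sum hRHS
    _ = 11 * ∑ i ∈ Finset.range s,
        ((2 : ℝ) ^ l i * fejer (2 ^ l i) x + (2 : ℝ) ^ t i * fejer (2 ^ t i) x +
          (2 : ℝ) ^ l i * ∑ k ∈ Finset.Icc (l i) (t i), dirichlet (2 ^ k) x) := by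
      rw [Finset.mul_sum]
end
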